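/- Let G1 be a torsion group, G2 a group, and φ : G1 → G2 a bijection such that a multiset over G1 is a product-one sequence over G1 if and only if its termwise image under φ is a product-one sequence over G2. Then φ is either a group isomorphism (φ(ab) = φ(a)φ(b) for all a, b in G1) or a group anti-isomorphism (φ(ab) = φ(b)φ(a) for all a, b in G1). -/

import Mathlib

/-- A multiset `S` over a group `G` is a *product-one sequence* if its terms can be
ordered so that their product is `1`. -/
def IsProductOne {G : Type*} [Group G] (S : Multiset G) : Prop :=
  ∃ l : List G, (l : Multiset G) = S ∧ l.prod = 1

/-- The monoid `B(G)` of product-one sequences over `G`, as a submonoid of the free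
abelian monoid (finite multisets under addition) over `G`. -/
def ProductOneSubmonoid (G : Type*) [Group G] : AddSubmonoid (Multiset G) where
  carrier := {S | IsProductOne S}
  zero_mem' := ⟨[], rfl, rfl⟩
  add_mem' := by
    rintro a b ⟨l1, rfl, p1⟩ ⟨l2, rfl, p2⟩
    exact ⟨l1 ++ l2, by simp, by simp [p1, p2]⟩

section helper
variable {G : Type*} [Group G]

private lemma rot {p q : G} (h : p * q = 1) : q * p = 1 := by
  rw [mul_eq_one_iff_eq_inv] at h; subst h; simp

private lemma rot3 {p q r : G} (h : p * q * r = 1) : q * r * p = 1 :=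
  rot (p := p) (q := q * r) (by rw [← mul_assoc]; exact h)

set_option linter.unusedSectionVars false

private lemma pair_eq {u v a b : G} (h : ({u, v} : Multiset G) = {a, b}) :
    (u = a ∧ v = b) ∨ (u = b ∧ v = a) := by
  have ha : a ∈ ({u, v} : Multiset G) := by rw [h]; simp
  simp only [Multiset.insert_eq_cons, Multiset.mem_cons, Multiset.mem_singleton] at ha
  rcases ha with rfl | rfl
  · left
    refine ⟨rfl, ?_⟩
    have h2 := (Multiset.cons_inj_right (a := a) (s := ({v} : Multiset G)) (t := {b})).mp (by simpa using h)
    simpa using h2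
  · right
    refine ⟨?_, rfl⟩
    rw [Multiset.pair_comm u a] at h
    have h2 := (Multiset.cons_inj_right (a := a) (s := ({u} : Multiset G)) (t := {b})).mp (by simpa using h)
    simpa using h2

private lemma triple_eq {u v w a b c : G} (h : ({u, v, w} : Multiset G) = {a, b, c}) :
    (u=a ∧ v=b ∧ w=c) ∨ (u=a ∧ v=c ∧ w=b) ∨ (u=b ∧ v=a ∧ w=c) ∨
    (u=b ∧ v=c ∧ w=a) ∨ (u=c ∧ v=a ∧ w=b) ∨ (u=c ∧ v=b ∧ w=a) := by
  have ha : a ∈ ({u, v, w} : Multiset G) := by rw [h]; simp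
  simp only [Multiset.insert_eq_cons, Multiset.mem_cons, Multiset.mem_singleton] at ha
  rcases ha with rfl | rfl | rfl
  · have h2 : ({v, w} : Multiset G) = {b, c} :=
      (Multiset.cons_inj_right (a := a)).mp (by simpa using h)
    rcases pair_eq h2 with ⟨rfl, rfl⟩ | ⟨rfl, rfl⟩
    · exact Or.inl ⟨rfl, rfl, rfl⟩
    · exact Or.inr (Or.inl ⟨rfl, rfl, rfl⟩)
  · have hsw : ({u, a, w} : Multiset G) = {a, u, w} := by
      simp only [Multiset.insert_eq_cons]; exact Multiset.cons_swap u a _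
    rw [hsw] at h
    have h2 : ({u, w} : Multiset G) = {b, c} :=
      (Multiset.cons_inj_right (a := a)).mp (by simpa using h)
    rcases pair_eq h2 with ⟨rfl, rfl⟩ | ⟨rfl, rfl⟩
    · exact Or.inr (Or.inr (Or.inl ⟨rfl, rfl, rfl⟩))
    · exact Or.inr (Or.inr (Or.inr (Or.inr (Or.inl ⟨rfl, rfl, rfl⟩))))
  · have hsw : ({u, v, a} : Multiset G) = {a, u, v} := by
      simp only [Multiset.insert_eq_cons, ← Multiset.cons_zero]
      rw [Multiset.cons_swap v a, Multiset.cons_swap u a]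
    rw [hsw] at h
    have h2 : ({u, v} : Multiset G) = {b, c} :=
      (Multiset.cons_inj_right (a := a)).mp (by simpa using h)
    rcases pair_eq h2 with ⟨rfl, rfl⟩ | ⟨rfl, rfl⟩
    · exact Or.inr (Or.inr (Or.inr (Or.inl ⟨rfl, rfl, rfl⟩)))
    · exact Or.inr (Or.inr (Or.inr (Or.inr (Or.inr ⟨rfl, rfl, rfl⟩))))

private lemma p1_single {a : G} (h : IsProductOne ({a} : Multiset G)) : a = 1 := by
  obtain ⟨l, hl, hp⟩ := h
  have hlen : l.length = 1 := by
    have := congrArg Multiset.card hl; simpa using this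
  match l, hlen with
  | [u], _ =>
    have : u = a := by simpa using hl
    subst this
    simpa using hp

private lemma p1_pair {a b : G} (h : IsProductOne ({a, b} : Multiset G)) : a * b = 1 := by
  obtain ⟨l, hl, hp⟩ := h
  have hlen : l.length = 2 := by
    have := congrArg Multiset.card hl; simpa using this
  match l, hlen with
  | [u, v], _ =>
    have h2 : ({u, v} : Multiset G) = {a, b} := by exact hl
    have hp' : u * v = 1 := by simpa using hp
    rcases pair_eq h2 with ⟨rfl, rfl⟩ | ⟨rfl, rfl⟩
    · exact hp'
    · exact rot hp'

private lemma p1_triple {a b c : G} (h : IsProductOne ({a, b, c} : Multiset G)) :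
    a * b * c = 1 ∨ a * c * b = 1 := by
  obtain ⟨l, hl, hp⟩ := h
  have hlen : l.length = 3 := by
    have := congrArg Multiset.card hl; simpa using this
  match l, hlen with
  | [u, v, w], _ =>
    have h3 : ({u, v, w} : Multiset G) = {a, b, c} := by exact hl
    have hp' : u * v * w = 1 := by simpa [mul_assoc] using hp
    rcases triple_eq h3 with ⟨rfl,rfl,rfl⟩|⟨rfl,rfl,rfl⟩|⟨rfl,rfl,rfl⟩|⟨rfl,rfl,rfl⟩|⟨rfl,rfl,rfl⟩|⟨rfl,rfl,rfl⟩
    · exact Or.inl hp'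
    · exact Or.inr hp'
    · exact Or.inr (rot3 hp')
    · exact Or.inl (rot3 (rot3 hp'))
    · exact Or.inl (rot3 hp')
    · exact Or.inr (rot3 (rot3 hp'))

end helper

private theorem main_from_D {G1 G2 : Type*} [Group G1] [Group G2] (φ : G1 → G2)
    (hinj : Function.Injective φ)
    (D : ∀ x y : G1, (φ (x*y) = φ x * φ y ∧ φ (y*x) = φ y * φ x) ∨
                     (φ (x*y) = φ y * φ x ∧ φ (y*x) = φ x * φ y)) :
    (∀ a b : G1, φ (a*b) = φ a * φ b) ∨ (∀ a b : G1, φ (a*b) = φ b * φ a) := by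
  have cp : ∀ x y : G1, x*y = y*x ↔ φ x * φ y = φ y * φ x := by
    intro x y
    constructor
    · intro e
      rcases D x y with ⟨h1, h2⟩ | ⟨h1, h2⟩
      · rw [← h1, ← h2, e]
      · rw [← h2, ← h1, e]
    · intro e
      rcases D x y with ⟨h1, h2⟩ | ⟨h1, h2⟩
      · exact hinj (by rw [h1, h2, e])
      · exact hinj (by rw [h1, h2, ← e])
  have core : ∀ x y z : G1, x*y ≠ y*x → x*z ≠ z*x → y*z ≠ z*y →
      φ (x*y) = φ x * φ y → φ (y*x) = φ y * φ x →
      φ (x*z) = φ z * φ x → φ (z*x) = φ x * φ z → False := by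
    intro x y z hxy hxz hyz pxy pyx pxz pzx
    have nxy : φ x * φ y ≠ φ y * φ x := fun e => hxy ((cp x y).mpr e)
    have nxz : φ x * φ z ≠ φ z * φ x := fun e => hxz ((cp x z).mpr e)
    have nyz : φ y * φ z ≠ φ z * φ y := fun e => hyz ((cp y z).mpr e)
    -- (i) : Y*X*Z = Z*X*Y
    have hi : φ y * φ x * φ z = φ z * φ x * φ y := by
      obtain ⟨e1, -⟩ | ⟨e1, -⟩ := D (z*x) y <;> rw [pzx] at e1 <;>
        (try simp only [← mul_assoc] at e1) <;>
        obtain ⟨e2, -⟩ | ⟨e2, -⟩ := D z (x*y) <;> rw [pxy] at e2 <;>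
        (try simp only [← mul_assoc] at e2) <;> rw [e1] at e2
      -- four branches
      · exact absurd (mul_right_cancel e2) nxz
      · rw [mul_assoc (φ x) (φ z), mul_assoc (φ x) (φ y)] at e2
        exact absurd (mul_left_cancel e2).symm nyz
      · exact e2
      · exact absurd (mul_right_cancel e2).symm nxy
    -- (ii) : φ (x*y*z) = X*Y*Z
    have hxyz : φ (x*y*z) = φ x * φ y * φ z := by
      have hyzor : φ (y*z) = φ y * φ z ∨ φ (y*z) = φ z * φ y := (D y z).imp And.left And.left
      obtain ⟨e1, -⟩ | ⟨e1, -⟩ := D (x*y) z <;> rw [pxy] at e1 <;>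
        (try simp only [← mul_assoc] at e1)
      · exact e1
      · exfalso
        obtain ⟨e2, -⟩ | ⟨e2, -⟩ := D x (y*z) <;> rcases hyzor with hyz' | hyz' <;>
          rw [hyz'] at e2 <;> (try simp only [← mul_assoc] at e2) <;> rw [e1] at e2
        · -- Z*X*Y = X*Y*Z
          have := hi.trans e2  -- Y*X*Z = X*Y*Z
          exact nxy (mul_right_cancel this).symm
        · -- Z*X*Y = X*Z*Y
          exact nxz (mul_right_cancel e2).symm
        · -- Z*X*Y = Y*Z*X
          have h2 : φ y * φ x * φ z = φ y * φ z * φ x := hi.trans e2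
          rw [mul_assoc (φ y) (φ x), mul_assoc (φ y) (φ z)] at h2
          exact nxz (mul_left_cancel h2)
        · -- Z*X*Y = Z*Y*X
          rw [mul_assoc (φ z) (φ x), mul_assoc (φ z) (φ y)] at e2
          exact nxy (mul_left_cancel e2)
    -- (iii)
    obtain ⟨f1, -⟩ | ⟨f1, -⟩ := D (x*y*z) x <;> rw [hxyz] at f1 <;>
      (try simp only [← mul_assoc] at f1) <;>
      obtain ⟨f2, -⟩ | ⟨f2, -⟩ := D (x*y) (z*x) <;> rw [pxy, pzx] at f2 <;>
      (try simp only [← mul_assoc] at f2) <;> rw [f1] at f2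
    · -- X*Y*Z*X = X*Y*X*Z
      rw [mul_assoc (φ x * φ y) (φ z), mul_assoc (φ x * φ y) (φ x)] at f2
      exact nxz (mul_left_cancel f2).symm
    · -- X*Y*Z*X = X*Z*X*Y
      simp only [mul_assoc] at f2
      have f3 := mul_left_cancel f2  -- Y*(Z*X) = Z*(X*Y)
      simp only [← mul_assoc] at f3  -- Y*Z*X = Z*X*Y
      have f4 : φ y * φ z * φ x = φ y * φ x * φ z := f3.trans hi.symm
      rw [mul_assoc (φ y) (φ z), mul_assoc (φ y) (φ x)] at f4
      exact nxz (mul_left_cancel f4).symm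
    · -- X*X*Y*Z = X*Y*X*Z
      simp only [mul_assoc] at f2
      have f3 := mul_left_cancel f2  -- X*(Y*Z) = Y*(X*Z)
      simp only [← mul_assoc] at f3  -- X*Y*Z = Y*X*Z
      exact nxy (mul_right_cancel f3)
    · -- X*X*Y*Z = X*Z*X*Y
      simp only [mul_assoc] at f2
      have f3 := mul_left_cancel f2
      simp only [← mul_assoc] at f3  -- X*Y*Z = Z*X*Y
      have f4 := f3.trans hi.symm    -- X*Y*Z = Y*X*Z
      exact nxy (mul_right_cancel f4)
  have shared : ∀ x y z : G1, x*y ≠ y*x → x*z ≠ z*x →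
      φ (x*y) = φ x * φ y → φ (y*x) = φ y * φ x →
      φ (x*z) = φ z * φ x → φ (z*x) = φ x * φ z → False := by
    intro x y z hxy hxz pxy pyx pxz pzx
    by_cases hyz : y*z = z*y
    · -- replace y by x*y
      have nxy : φ x * φ y ≠ φ y * φ x := fun e => hxy ((cp x y).mpr e)
      have h1 : x*(x*y) ≠ (x*y)*x := by
        intro e
        apply hxy
        have e' : x*(x*y) = x*(y*x) := by rw [e, mul_assoc]
        exact mul_left_cancel e'
      have h2 : (x*y)*z ≠ z*(x*y) := by
        intro e
        apply hxz
        have e2 : x*y*z = x*z*y := by rw [mul_assoc, hyz, ← mul_assoc]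
        rw [e2, ← mul_assoc] at e
        exact mul_right_cancel e
      have pxxy : φ (x*(x*y)) = φ x * φ (x*y) ∧ φ ((x*y)*x) = φ (x*y) * φ x := by
        have hx2 : φ (x*x) = φ x * φ x := by rcases D x x with ⟨e,-⟩|⟨e,-⟩ <;> exact e
        rcases D x (x*y) with ⟨e1, e2⟩|⟨e1, e2⟩
        · exact ⟨e1, e2⟩
        · exfalso
          rw [← mul_assoc, pxy] at e1
          -- e1 : φ (x*x*y) = (X*Y)*X
          rcases D (x*x) y with ⟨e3, -⟩|⟨e3, -⟩ <;> rw [hx2] at e3 <;> rw [e1] at e3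
          · -- X*Y*X = X*X*Y
            rw [mul_assoc (φ x) (φ y), mul_assoc (φ x) (φ x)] at e3
            exact nxy (mul_left_cancel e3).symm
          · -- X*Y*X = Y*(X*X)
            rw [← mul_assoc] at e3
            exact nxy (mul_right_cancel e3)
      exact core x (x*y) z h1 hxz h2 pxxy.1 pxxy.2 pxz pzx
    · exact core x y z hxy hxz hyz pxy pyx pxz pzx
  by_cases hH : ∀ a b : G1, φ (a*b) = φ a * φ b
  · exact Or.inl hH
  right
  push_neg at hH
  obtain ⟨a, b, hab⟩ := hH
  have hba : a*b ≠ b*a := by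
    intro e
    rcases D a b with ⟨e1,-⟩|⟨e1,-⟩
    · exact hab e1
    · exact hab (by rw [e1, ← (cp a b).mp e])
  have pab : φ (a*b) = φ b * φ a ∧ φ (b*a) = φ a * φ b := by
    rcases D a b with ⟨e1,e2⟩|⟨e1,e2⟩
    · exact absurd e1 hab
    · exact ⟨e1, e2⟩
  intro c d
  by_cases hcd : c*d = d*c
  · rcases D c d with ⟨e1,-⟩|⟨e1,-⟩
    · rw [e1, (cp c d).mp hcd]
    · exact e1
  rcases D c d with ⟨e1,e2⟩|⟨e1,e2⟩
  swap
  · exact e1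
  exfalso
  by_cases hac : a*c = c*a
  · by_cases had : a*d = d*a
    · by_cases hbc : b*c = c*b
      · by_cases hbd : b*d = d*b
        · -- all commute; use t = b*c
          have hat : a*(b*c) ≠ (b*c)*a := by
            intro e
            apply hba
            have e' : a*b*c = b*a*c :=
              calc a*b*c = a*(b*c) := mul_assoc a b c
                _ = (b*c)*a := e
                _ = b*(c*a) := mul_assoc b c a
                _ = b*(a*c) := by rw [← hac]
                _ = b*a*c := (mul_assoc b a c).symm
            exact mul_right_cancel e'
          have htd : (b*c)*d ≠ d*(b*c) := by
            intro e
            apply hcd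
            have e' : b*(c*d) = b*(d*c) :=
              calc b*(c*d) = b*c*d := (mul_assoc b c d).symm
                _ = d*(b*c) := e
                _ = (d*b)*c := (mul_assoc d b c).symm
                _ = (b*d)*c := by rw [← hbd]
                _ = b*(d*c) := mul_assoc b d c
            exact mul_left_cancel e'
          rcases D a (b*c) with ⟨g1,g2⟩|⟨g1,g2⟩
          · exact shared a (b*c) b hat hba g1 g2 pab.1 pab.2
          · rcases D (b*c) d with ⟨k1,k2⟩|⟨k1,k2⟩
            · exact shared (b*c) d a htd (fun e => hat e.symm) k1 k2 g2 g1
            · exact shared d c (b*c) (fun e => hcd e.symm) (fun e => htd e.symm) e2 e1 k2 k1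
        · rcases D b d with ⟨g1,g2⟩|⟨g1,g2⟩
          · exact shared b d a hbd (fun e => hba e.symm) g1 g2 pab.2 pab.1
          · exact shared d c b (fun e => hcd e.symm) (fun e => hbd e.symm) e2 e1 g2 g1
      · rcases D b c with ⟨g1,g2⟩|⟨g1,g2⟩
        · exact shared b c a hbc (fun e => hba e.symm) g1 g2 pab.2 pab.1
        · exact shared c d b hcd (fun e => hbc e.symm) e1 e2 g2 g1
    · rcases D a d with ⟨g1,g2⟩|⟨g1,g2⟩
      · exact shared a d b had hba g1 g2 pab.1 pab.2
      · exact shared d c a (fun e => hcd e.symm) (fun e => had e.symm) e2 e1 g2 g1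
  · rcases D a c with ⟨g1,g2⟩|⟨g1,g2⟩
    · exact shared a c b hac hba g1 g2 pab.1 pab.2
    · exact shared c d a hcd (fun e => hac e.symm) e1 e2 g2 g1

theorem A7 (G1 G2 : Type*) [Group G1] [Group G2]
    (htor : ∀ g : G1, IsOfFinOrder g) (φ : G1 → G2) (hbij : Function.Bijective φ)
    (h : ∀ S : Multiset G1, IsProductOne S ↔ IsProductOne (S.map φ)) :
    (∀ a b : G1, φ (a * b) = φ a * φ b) ∨ (∀ a b : G1, φ (a * b) = φ b * φ a) := by
  have hinv : ∀ x : G1, φ x⁻¹ = (φ x)⁻¹ := by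
    intro x
    have k : IsProductOne ({x, x⁻¹} : Multiset G1) := ⟨[x, x⁻¹], rfl, by simp⟩
    have k2 := (h _).mp k
    simp only [Multiset.insert_eq_cons, Multiset.map_cons, Multiset.map_singleton] at k2
    have k3 := p1_pair k2
    rw [mul_eq_one_iff_eq_inv] at k3
    rw [k3, inv_inv]
  -- pair fact
  have pairfact : ∀ x y : G1, φ (x*y) = φ x * φ y ∨ φ (x*y) = φ y * φ x := by
    intro x y
    have k : IsProductOne ({x, y, (x*y)⁻¹} : Multiset G1) :=
      ⟨[x, y, (x*y)⁻¹], rfl, by simp [mul_assoc]⟩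
    have k2 := (h _).mp k
    simp only [Multiset.insert_eq_cons, Multiset.map_cons, Multiset.map_singleton] at k2
    rcases p1_triple k2 with e | e <;> rw [hinv] at e
    · left
      rw [mul_inv_eq_one] at e
      exact e.symm
    · right
      have e2 := rot e   -- φ(x*y)⁻¹ * φ y * φ x ... check shape
      -- e : φ x * φ(x*y)⁻¹ * φ y = 1
      have e3 := rot3 e  -- φ(x*y)⁻¹ * φ y * φ x = 1
      rw [mul_assoc, inv_mul_eq_one] at e3
      exact e3
  -- two-sided fact
  have twosided : ∀ x y : G1, φ x * φ y = φ (x*y) ∨ φ x * φ y = φ (y*x) := by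
    intro x y
    obtain ⟨z, hz⟩ := hbij.surjective ((φ x * φ y)⁻¹)
    have k2 : IsProductOne (Multiset.map φ ({x, y, z} : Multiset G1)) := by
      refine ⟨[φ x, φ y, φ z], ?_, ?_⟩
      · simp only [Multiset.insert_eq_cons, Multiset.map_cons, Multiset.map_singleton]; rfl
      · simp [hz, mul_assoc]
    have k := (h _).mpr k2
    rcases p1_triple k with e | e
    · left
      have hz2 : z = (x*y)⁻¹ := eq_inv_of_mul_eq_one_right e
      rw [hz2, hinv] at hz
      exact (inv_injective hz).symm
    · right
      have e2 := rot3 e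
      rw [mul_assoc] at e2
      have hz2 : z = (y*x)⁻¹ := eq_inv_of_mul_eq_one_left e2
      rw [hz2, hinv] at hz
      exact (inv_injective hz).symm
  -- dichotomy D
  have D : ∀ x y : G1, (φ (x*y) = φ x * φ y ∧ φ (y*x) = φ y * φ x) ∨
      (φ (x*y) = φ y * φ x ∧ φ (y*x) = φ x * φ y) := by
    intro x y
    rcases pairfact x y with p | p
    · left
      refine ⟨p, ?_⟩
      rcases pairfact y x with q | q
      · exact q
      · -- φ(y*x) = φ x * φ y = φ (x*y)
        rcases twosided y x with t | t
        · exact t.symm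
        · exact q.trans (t.trans p).symm
    · rcases twosided x y with t | t
      · left
        refine ⟨t.symm, ?_⟩
        rcases pairfact y x with q | q
        · exact q
        · exact q.trans (t.trans p)
      · right
        exact ⟨p, t.symm⟩
  exact main_from_D φ hbij.injective D
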